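/- Let r ≥ 2 and n ≥ r be integers, and let M be an n-element rank-r matroid with no U_{2,3}-minor. Then M has at most (n/r)^r bases, with equality attainable when r divides n. -/

import Mathlib

open Matroid Set Filter

variable {α : Type*}

/-- The number of bases of a matroid. -/
noncomputable def Matroid.numBases (M : Matroid α) : ℕ := {B : Set α | M.IsBase B}.ncard

/-- Deletion of a set of elements from a matroid. -/
def Matroid.del (M : Matroid α) (D : Set α) : Matroid α := M ↾ (M.E \ D)

/-- Contraction of a set of elements in a matroid, defined by duality. -/
def Matroid.con (M : Matroid α) (C : Set α) : Matroid α := (M✶ ↾ (M✶.E \ C))✶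

/-- `N` is a minor of `M`: it is obtained by contracting a set `C` and deleting a set `D`. -/
def Matroid.IsMinorOf (N M : Matroid α) : Prop :=
  ∃ C D : Set α, C ⊆ M.E ∧ D ⊆ M.E ∧ Disjoint C D ∧ N = (M.con C).del D

/-- `M` is (a copy of) the uniform matroid `U_{s,t}`: it has `t` elements and its bases are
exactly the `s`-element subsets of the ground set. -/
def Matroid.IsUnif (M : Matroid α) (s t : ℕ) : Prop :=
  M.E.Finite ∧ M.E.ncard = t ∧ ∀ B, M.IsBase B ↔ B ⊆ M.E ∧ B.ncard = s

/-- `M` has a minor isomorphic to the uniform matroid `U_{s,t}`. -/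
def Matroid.HasUnifMinor (M : Matroid α) (s t : ℕ) : Prop :=
  ∃ N : Matroid α, N.IsMinorOf M ∧ N.IsUnif s t

/-- `M` has a restriction isomorphic to the uniform matroid `U_{s,t}`. -/
def Matroid.HasUnifRestriction (M : Matroid α) (s t : ℕ) : Prop :=
  ∃ X ⊆ M.E, (M ↾ X).IsUnif s t

/-- `M` has rank `r`. -/
def Matroid.RankEq (M : Matroid α) (r : ℕ) : Prop := ∃ B, M.IsBase B ∧ B.ncard = r

/-- `M` is a simple matroid: every single element and every pair of distinct elements
of the ground set is independent. -/
def Matroid.IsSimple (M : Matroid α) : Prop :=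
  (∀ e ∈ M.E, M.Indep {e}) ∧ ∀ e ∈ M.E, ∀ f ∈ M.E, e ≠ f → M.Indep {e, f}

namespace Matroid

variable {M : Matroid α} {B B₀ C I J D X : Set α} {e f : α}

lemma con_ground (M : Matroid α) (C : Set α) : (M.con C).E = M.E \ C := rfl

lemma con_indep_iff (hC : C ⊆ M.E) (hJ : M.IsBasis' J C) :
    (M.con C).Indep I ↔ I ⊆ M.E \ C ∧ M.Indep (I ∪ J) := by
  have hJC : J ⊆ C := hJ.subset
  have hJE : J ⊆ M.E := hJC.trans hC
  set R := M.E \ C with hR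
  have hRE : R ⊆ M.E := diff_subset
  have hcon : M.con C = (M✶ ↾ R)✶ := rfl
  rw [hcon, dual_indep_iff_exists']
  have hg : (M✶ ↾ R).E = R := rfl
  rw [hg]
  constructor
  · rintro ⟨hIR, B, hB, hdis⟩
    refine ⟨hIR, ?_⟩
    rw [isBase_restrict_iff (M := M✶) (X := R) hRE] at hB
    have hBR : B ⊆ R := hB.subset
    have hBE : B ⊆ M.E := hBR.trans hRE
    have hspan : M.Spanning (M.E \ B) := by
      have := hB.indep
      rw [← coindep_def] at this
      exact this.compl_spanning
    set B₂ := R \ B with hB₂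
    obtain ⟨K, hK, hJK⟩ := hJ.indep.subset_isBasis'_of_subset (subset_union_left (s := J) (t := B₂))
    have hKcl : M.closure K = M.E := by
      have h1 : M.closure K = M.closure (J ∪ B₂) := hK.closure_eq_closure
      have h2 : M.closure (J ∪ B₂) = M.closure (C ∪ B₂) := by
        rw [← closure_union_closure_left_eq, hJ.closure_eq_closure,
          closure_union_closure_left_eq]
      have h3 : M.E \ B ⊆ C ∪ B₂ := by
        intro x hx
        by_cases hxC : x ∈ C
        · exact Or.inl hxC
        · exact Or.inr ⟨⟨hx.1, hxC⟩, hx.2⟩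
      have h4 : M.E ⊆ M.closure (C ∪ B₂) := by
        rw [← hspan.closure_eq]
        exact M.closure_subset_closure h3
      exact subset_antisymm (M.closure_subset_ground K) (by rw [h1, h2]; exact h4)
    have hB₂K : B₂ ⊆ K := by
      intro e he
      by_contra heK
      have hins : M✶.Indep (insert e B) ∧ insert e B ⊆ R := by
        constructor
        · rw [← coindep_def]
          have hsub : insert e B ⊆ M.E := insert_subset (hRE he.1) hBE
          rw [coindep_iff_compl_spanning hsub]
          have hKsub : K ⊆ M.E \ insert e B := by
            intro x hx
            have hxJB : x ∈ J ∪ B₂ := hK.subset hx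
            have hxE : x ∈ M.E := by
              rcases hxJB with h | h
              · exact hJE h
              · exact hRE h.1
            refine ⟨hxE, ?_⟩
            rintro (rfl | hxB)
            · exact heK hx
            · rcases hxJB with h | h
              · exact (hBR hxB).2 (hJC h)
              · exact h.2 hxB
          rw [spanning_iff_closure_eq]
          refine subset_antisymm (M.closure_subset_ground _) ?_
          have h5 := M.closure_subset_closure hKsub
          rw [hKcl] at h5
          exact h5
        · exact insert_subset he.1 hBR
      have := hB.1.2 hins (subset_insert e B)
      exact he.2 (this (mem_insert e B))
    have hKeq : K = J ∪ B₂ := subset_antisymm hK.subset (union_subset hJK hB₂K)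
    have hIB₂ : I ⊆ B₂ := fun x hx => ⟨hIR hx, disjoint_left.mp hdis hx⟩
    exact (hKeq ▸ hK.indep).subset (union_subset (hIB₂.trans subset_union_right) subset_union_left)
  · rintro ⟨hIR, hIJ⟩
    obtain ⟨B₀, hB₀, hsub⟩ := hIJ.exists_isBase_superset
    have hB₀E : B₀ ⊆ M.E := hB₀.subset_ground
    refine ⟨hIR, R \ B₀, ?_, ?_⟩
    · rw [isBase_restrict_iff (M := M✶) (X := R) hRE]
      have hcompl : M.E \ (R \ B₀) = C ∪ B₀ := by
        ext x
        simp only [hR, mem_diff, mem_union, not_and, not_not]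
        constructor
        · rintro ⟨hxE, h⟩
          by_cases hxC : x ∈ C
          · exact Or.inl hxC
          · exact Or.inr (h ⟨hxE, hxC⟩)
        · rintro (h | h)
          · exact ⟨hC h, fun hx => absurd h hx.2⟩
          · exact ⟨hB₀E h, fun _ => h⟩
      refine ⟨⟨⟨?_, diff_subset⟩, ?_⟩, hRE⟩
      · rw [← coindep_def, coindep_iff_compl_spanning (diff_subset.trans hRE), hcompl]
        exact hB₀.spanning_of_superset subset_union_right (union_subset hC hB₀E)
      · rintro B' ⟨hB'i, hB'R⟩ hBB'
        rw [← coindep_def] at hB'i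
        have hspan' : M.Spanning (M.E \ B') := hB'i.compl_spanning
        set B₁ := B₀ \ B' with hB₁
        have hsub1 : M.E \ B' ⊆ C ∪ B₁ := by
          intro x hx
          by_cases hxC : x ∈ C
          · exact Or.inl hxC
          · have hxR : x ∈ R := ⟨hx.1, hxC⟩
            have hxB₀ : x ∈ B₀ := by
              by_contra hxB₀
              exact hx.2 (hBB' ⟨hxR, hxB₀⟩)
            exact Or.inr ⟨hxB₀, hx.2⟩
        have hcl : M.closure (J ∪ B₁) = M.E := by
          have h2 : M.closure (J ∪ B₁) = M.closure (C ∪ B₁) := by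
            rw [← closure_union_closure_left_eq, hJ.closure_eq_closure,
              closure_union_closure_left_eq]
          refine subset_antisymm (M.closure_subset_ground _) ?_
          rw [h2, ← hspan'.closure_eq]
          exact M.closure_subset_closure hsub1
        have hJB₁ : J ∪ B₁ ⊆ B₀ := union_subset (subset_union_right.trans hsub) diff_subset
        have heq : J ∪ B₁ = B₀ := by
          by_contra hne
          have hss : J ∪ B₁ ⊂ B₀ := hJB₁.ssubset_of_ne hne
          have := hB₀.indep.closure_ssubset_closure hss
          rw [hcl] at this
          exact this.not_subset (M.closure_subset_ground B₀)
        intro x hxB'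
        have hxR : x ∈ R := hB'R hxB'
        refine ⟨hxR, fun hxB₀ => ?_⟩
        have : x ∈ J ∪ B₁ := heq ▸ hxB₀
        rcases this with h | h
        · exact hxR.2 (hJC h)
        · exact h.2 hxB'
    · rw [disjoint_left]
      intro x hxI hxB
      exact hxB.2 (hsub (Or.inl hxI))

/-- Every dependent set contains a dependent set of size at most two. -/
def NoLine (M : Matroid α) : Prop := ∀ ⦃D⦄, M.Dep D → ∃ x ∈ D, ∃ y ∈ D, M.Dep ({x, y} : Set α)

lemma NoLine.restrict (h : M.NoLine) (hX : X ⊆ M.E) : (M ↾ X).NoLine := by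
  intro D hD
  rw [restrict_dep_iff] at hD
  have hDE : D ⊆ M.E := hD.2.trans hX
  obtain ⟨x, hx, y, hy, hxy⟩ := h (dep_iff.mpr ⟨hD.1, hDE⟩)
  refine ⟨x, hx, y, hy, ?_⟩
  rw [restrict_dep_iff]
  exact ⟨hxy.not_indep, insert_subset (hD.2 hx) (singleton_subset_iff.mpr (hD.2 hy))⟩

lemma NoLine.con (h : M.NoLine) (hC : C ⊆ M.E) : (M.con C).NoLine := by
  obtain ⟨J, hJ⟩ := M.exists_isBasis' C
  have hJC : J ⊆ C := hJ.subset
  have hJE : J ⊆ M.E := hJC.trans hC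
  intro D hD
  rw [dep_iff, con_ground] at hD
  obtain ⟨hDi, hDE⟩ := hD
  rw [con_indep_iff hC hJ] at hDi
  have hDep : M.Dep (D ∪ J) := by
    rw [dep_iff]
    exact ⟨fun hi => hDi ⟨hDE, hi⟩, union_subset (hDE.trans diff_subset) hJE⟩
  obtain ⟨x, hx, y, hy, hxy⟩ := h hDep
  -- helper : an element of D parallel into J gives a contracted loop
  have loop : ∀ z ∈ D, ∀ w ∈ J, M.Dep {z, w} → (M.con C).Dep {z, z} := by
    intro z hz w hw hzw
    have hzE : z ∈ M.E \ C := hDE hz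
    have hwi : M.Indep {w} := hJ.indep.subset (singleton_subset_iff.mpr hw)
    have hzw_ne : z ≠ w := by
      rintro rfl
      exact hzw.not_indep (by rwa [pair_eq_singleton])
    have hzcl : z ∈ M.closure {w} := by
      exact ((hwi.insert_dep_iff).mp hzw).1
    have hzclJ : z ∈ M.closure J :=
      M.closure_subset_closure (singleton_subset_iff.mpr hw) hzcl
    have hzJ : z ∉ J := fun hzJ => hzE.2 (hJC hzJ)
    have : M.Dep (insert z J) := hJ.indep.insert_dep_iff.mpr ⟨hzclJ, hzJ⟩
    rw [pair_eq_singleton, dep_iff, con_ground]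
    refine ⟨fun hi => ?_, singleton_subset_iff.mpr hzE⟩
    rw [con_indep_iff hC hJ] at hi
    rw [singleton_union] at hi
    exact this.not_indep hi.2
  rcases hx with hxD | hxJ
  · rcases hy with hyD | hyJ
    · refine ⟨x, hxD, y, hyD, ?_⟩
      rw [dep_iff, con_ground]
      have hpair : ({x, y} : Set α) ⊆ M.E \ C :=
        insert_subset (hDE hxD) (singleton_subset_iff.mpr (hDE hyD))
      refine ⟨fun hi => ?_, hpair⟩
      rw [con_indep_iff hC hJ] at hi
      exact (hxy.superset subset_union_left
        (union_subset (hpair.trans diff_subset) hJE)).not_indep hi.2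
    · exact ⟨x, hxD, x, hxD, loop x hxD y hyJ hxy⟩
  · rcases hy with hyD | hyJ
    · refine ⟨y, hyD, y, hyD, loop y hyD x hxJ ?_⟩
      rwa [pair_comm]
    · exact absurd (hJ.indep.subset (insert_subset hxJ (singleton_subset_iff.mpr hyJ)))
        hxy.not_indep

lemma IsUnif.not_noline {N : Matroid α} (h : N.IsUnif 2 3) : ¬ N.NoLine := by
  obtain ⟨hfin, h3, hbase⟩ := h
  intro hnl
  have hdepE : N.Dep N.E := by
    rw [dep_iff]
    refine ⟨fun hi => ?_, rfl.subset⟩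
    obtain ⟨B, hB, hEB⟩ := hi.exists_isBase_superset
    have : B = N.E := subset_antisymm hB.subset_ground hEB
    have h2 := ((hbase B).mp hB).2
    rw [this, h3] at h2
    exact absurd h2 (by norm_num)
  obtain ⟨x, hx, y, hy, hxy⟩ := hnl hdepE
  -- every pair (incl. degenerate) in N.E is independent
  by_cases hne : x = y
  · subst hne
    obtain ⟨z, hz, hzx⟩ : ∃ z ∈ N.E, z ≠ x := by
      by_contra hcon
      push_neg at hcon
      have : N.E ⊆ {x} := fun w hw => hcon w hw
      have := Set.ncard_le_ncard this (finite_singleton x)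
      simp [Set.ncard_singleton, h3] at this
    have hbase2 : N.IsBase {x, z} := (hbase _).mpr
      ⟨insert_subset hx (singleton_subset_iff.mpr hz), Set.ncard_pair (Ne.symm hzx)⟩
    have : N.Indep {x, x} := by
      rw [pair_eq_singleton]
      exact hbase2.indep.subset (singleton_subset_iff.mpr (mem_insert x _))
    exact hxy.not_indep this
  · have hbase2 : N.IsBase {x, y} := (hbase _).mpr
      ⟨insert_subset hx (singleton_subset_iff.mpr hy), Set.ncard_pair hne⟩
    exact hxy.not_indep hbase2.indep

lemma NoLine.not_hasUnifMinor (h : M.NoLine) : ¬ M.HasUnifMinor 2 3 := by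
  rintro ⟨N, ⟨C, D, hC, hD, hdis, rfl⟩, hunif⟩
  exact hunif.not_noline ((h.con hC).restrict diff_subset)

lemma noline_of_not_hasUnifMinor (hfin : M.E.Finite) (h : ¬ M.HasUnifMinor 2 3) : M.NoLine := by
  intro D hD
  by_contra hcon
  push_neg at hcon
  have hDE : D ⊆ M.E := hD.subset_ground
  have hpairs : ∀ x ∈ D, ∀ y ∈ D, M.Indep {x, y} := by
    intro x hx y hy
    by_contra hi
    exact (hcon x hx y hy) (dep_iff.mpr ⟨hi, insert_subset (hDE hx)
      (singleton_subset_iff.mpr (hDE hy))⟩)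
  -- minimal dependent subset of D
  set s : Set ℕ := {m | ∃ D', D' ⊆ D ∧ M.Dep D' ∧ D'.ncard = m} with hs
  have hsne : (sInf s) ∈ s := Nat.sInf_mem ⟨D.ncard, D, rfl.subset, hD, rfl⟩
  obtain ⟨C₀, hC₀D, hC₀dep, hC₀card⟩ := hsne
  have hC₀E : C₀ ⊆ M.E := hC₀D.trans hDE
  have hC₀fin : C₀.Finite := hfin.subset hC₀E
  have hmin : ∀ ⦃D'⦄, D' ⊂ C₀ → M.Indep D' := by
    intro D' hss
    by_contra hdep
    have hD'dep : M.Dep D' := dep_iff.mpr ⟨hdep, (hss.subset.trans hC₀E)⟩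
    have : D'.ncard ∈ s := ⟨D', hss.subset.trans hC₀D, hD'dep, rfl⟩
    have hlt : D'.ncard < C₀.ncard := Set.ncard_lt_ncard hss hC₀fin
    rw [hC₀card] at hlt
    exact absurd (Nat.sInf_le this) (by omega)
  -- three distinct elements
  obtain ⟨x, hx⟩ := hC₀dep.nonempty
  obtain ⟨y, hy, hyx⟩ : ∃ y ∈ C₀, y ≠ x := by
    by_contra hc; push_neg at hc
    exact hC₀dep.not_indep ((hpairs x (hC₀D hx) x (hC₀D hx)).subset
      (fun w hw => by rw [hc w hw]; exact mem_insert x _))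
  obtain ⟨z, hz, hzxy⟩ : ∃ z ∈ C₀, z ∉ ({x, y} : Set α) := by
    by_contra hc; push_neg at hc
    exact hC₀dep.not_indep ((hpairs x (hC₀D hx) y (hC₀D hy)).subset hc)
  set T : Set α := {x, y, z} with hT
  have hTC₀ : T ⊆ C₀ := insert_subset hx (insert_subset hy (singleton_subset_iff.mpr hz))
  have hTE : T ⊆ M.E := hTC₀.trans hC₀E
  set Cc : Set α := C₀ \ T with hCc
  have hCcE : Cc ⊆ M.E := diff_subset.trans hC₀E
  have hxCc : x ∉ Cc := fun hh => hh.2 (mem_insert x _)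
  have hCcI : M.Indep Cc := hmin (ssubset_of_subset_of_ne diff_subset (by
    intro he
    exact hxCc (by rw [he]; exact hx)))
  have hJ : M.IsBasis' Cc Cc := hCcI.isBasis_self.isBasis'
  set Dd : Set α := M.E \ (Cc ∪ T) with hDd
  have hground : (M.con Cc).E \ Dd = T := by
    rw [con_ground]
    ext w
    simp only [hDd, mem_diff, not_and, not_not, mem_union]
    constructor
    · rintro ⟨⟨hwE, hwCc⟩, h2⟩
      rcases h2 hwE with h | h
      · exact absurd h hwCc
      · exact h
    · intro hwT
      exact ⟨⟨hTE hwT, fun hwCc => hwCc.2 hwT⟩, fun _ => Or.inr hwT⟩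
  set N : Matroid α := (M.con Cc).del Dd with hN
  have hNE : N.E = T := hground
  have hTunion : T ∪ Cc = C₀ := by
    ext w; constructor
    · rintro (h | h); exacts [hTC₀ h, h.1]
    · intro hw; by_cases hwT : w ∈ T
      · exact Or.inl hwT
      · exact Or.inr ⟨hw, hwT⟩
  have hNindep : ∀ B ⊆ T, (N.Indep B ↔ B ≠ T) := by
    intro B hBT
    rw [hN, Matroid.del, restrict_indep_iff, hground, con_indep_iff hCcE hJ]
    constructor
    · rintro ⟨⟨-, hBi⟩, -⟩ rfl
      rw [hTunion] at hBi
      exact hC₀dep.not_indep hBi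
    · intro hne
      obtain ⟨w, hwT, hwB⟩ := exists_of_ssubset (hBT.ssubset_of_ne hne)
      refine ⟨⟨fun a ha => ⟨hTE (hBT ha), fun hac => hac.2 (hBT ha)⟩, hmin ?_⟩, hBT⟩
      refine ssubset_of_subset_of_ne ?_ ?_
      · rw [← hTunion]; exact union_subset_union_left Cc hBT
      · intro heq
        have hwmem : w ∈ B ∪ Cc := by rw [heq, ← hTunion]; exact Or.inl hwT
        rcases hwmem with hmem | hmem
        · exact hwB hmem
        · exact hmem.2 hwT
  have hzx : z ≠ x := fun hh => hzxy (by rw [hh]; exact mem_insert _ _)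
  have hzy : z ≠ y := fun hh => hzxy (by rw [hh]; exact mem_insert_of_mem _ rfl)
  have hcard3 : T.ncard = 3 := Set.ncard_eq_three.mpr ⟨x, y, z, hyx.symm, hzx.symm.symm.symm, hzy.symm, rfl⟩
  have hTfin : T.Finite := hfin.subset hTE
  have hunif : N.IsUnif 2 3 := by
    refine ⟨by rw [hNE]; exact hTfin, by rw [hNE]; exact hcard3, ?_⟩
    intro B
    rw [hNE]
    constructor
    · intro hB
      have hBT : B ⊆ T := hNE ▸ hB.subset_ground
      have hBne : B ≠ T := (hNindep B hBT).mp hB.indep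
      obtain ⟨w, hwT, hwB⟩ := exists_of_ssubset (hBT.ssubset_of_ne hBne)
      have hP : B ⊆ T \ {w} := fun a ha => ⟨hBT ha, fun hh => hwB (mem_singleton_iff.mp hh ▸ ha)⟩
      have hPindep : N.Indep (T \ {w}) := (hNindep _ diff_subset).mpr (by
        intro heq
        have : w ∈ T \ {w} := by rw [heq]; exact hwT
        exact this.2 rfl)
      have hBP := hB.eq_of_subset_indep hPindep hP
      refine ⟨hBT, ?_⟩
      rw [hBP, Set.ncard_diff_singleton_of_mem hwT, hcard3]
    · rintro ⟨hBT, hB2⟩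
      have hBne : B ≠ T := fun hh => by rw [hh, hcard3] at hB2; norm_num at hB2
      have hBi : N.Indep B := (hNindep B hBT).mpr hBne
      rw [isBase_iff_maximal_indep]
      refine ⟨hBi, fun I hI hBI => ?_⟩
      have hIT : I ⊆ T := hNE ▸ hI.subset_ground
      have hIne : I ≠ T := (hNindep I hIT).mp hI
      have hIlt : I.ncard < 3 := by
        rw [← hcard3]; exact Set.ncard_lt_ncard (hIT.ssubset_of_ne hIne) hTfin
      have hBIeq : B = I := Set.eq_of_subset_of_ncard_le hBI (by omega) (hTfin.subset hIT)
      exact hBIeq.symm.subset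
  exact h ⟨N, ⟨Cc, Dd, hCcE, diff_subset,
    disjoint_left.mpr (fun a ha hd => hd.2 (Or.inl ha)), rfl⟩, hunif⟩

def Rel (M : Matroid α) (e f : α) : Prop := M.Dep {e, f} ∨ e = f

lemma Rel.symm' (h : Rel M e f) : Rel M f e := by
  rcases h with h | h
  · exact Or.inl (by rwa [pair_comm])
  · exact Or.inr h.symm

lemma Rel.mem_closure (h : Rel M e f) (he : M.Indep {e}) (hf : M.Indep {f}) :
    e ∈ M.closure {f} := by
  rcases h with h | rfl
  · rcases eq_or_ne e f with rfl | hne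
    · exact M.mem_closure_self e (he.subset_ground rfl)
    · exact ((hf.insert_dep_iff).mp h).1
  · exact M.mem_closure_self e (he.subset_ground rfl)

lemma rel_eq (hB : M.Indep B) (he : M.Indep {e}) {b₁ b₂ : α} (hb₁ : b₁ ∈ B) (hb₂ : b₂ ∈ B)
    (h1 : Rel M e b₁) (h2 : Rel M e b₂) : b₁ = b₂ := by
  have hbi₁ : M.Indep {b₁} := hB.subset (singleton_subset_iff.mpr hb₁)
  have hbi₂ : M.Indep {b₂} := hB.subset (singleton_subset_iff.mpr hb₂)
  have hcl1 : e ∈ M.closure {b₁} := h1.mem_closure he hbi₁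
  have hcl2 : b₂ ∈ M.closure {e} := h2.symm'.mem_closure hbi₂ he
  have hmem : b₂ ∈ M.closure {b₁} :=
    closure_subset_closure_of_subset_closure (singleton_subset_iff.mpr hcl1) hcl2
  rcases (hbi₁.mem_closure_iff).mp hmem with hdep | hmem'
  · exact absurd (hB.subset (insert_subset hb₂ (singleton_subset_iff.mpr hb₁))) hdep.not_indep
  · exact (mem_singleton_iff.mp hmem').symm

lemma exists_rel_of_base (hnl : M.NoLine) (hB : M.IsBase B) (heE : e ∈ M.E)
    (hei : M.Indep {e}) : ∃ b ∈ B, Rel M e b := by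
  by_cases heB : e ∈ B
  · exact ⟨e, heB, Or.inr rfl⟩
  by_contra hc
  push_neg at hc
  have hins : M.Indep (insert e B) := by
    by_contra hi
    have hdep : M.Dep (insert e B) :=
      dep_iff.mpr ⟨hi, insert_subset heE hB.subset_ground⟩
    obtain ⟨x, hx, y, hy, hxy⟩ := hnl hdep
    rcases hx with rfl | hxB
    · rcases hy with rfl | hyB
      · exact hei.not_dep (by rwa [pair_eq_singleton] at hxy)
      · exact hc y hyB (Or.inl hxy)
    · rcases hy with rfl | hyB
      · exact hc x hxB (Or.inl (by rwa [pair_comm]))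
      · exact hxy.not_indep (hB.indep.subset (insert_subset hxB
          (singleton_subset_iff.mpr hyB)))
  exact heB (hB.eq_of_subset_indep hins (subset_insert e B) ▸ mem_insert e B)

/-- AM-GM packaging. -/
lemma amgm_bound {ι : Type*} [Fintype ι] (a : ι → ℕ) (n r : ℕ) (hcard : Fintype.card ι = r)
    (hr : 0 < r) (hsum : ∑ i, a i ≤ n) : ((∏ i, a i : ℕ) : ℝ) ≤ ((n : ℝ) / (r : ℝ)) ^ r := by
  have hr' : (r : ℝ) ≠ 0 := Nat.cast_ne_zero.mpr hr.ne'
  have hgm := Real.geom_mean_le_arith_mean_weighted Finset.univ (fun _ => 1 / (r : ℝ))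
    (fun i => (a i : ℝ)) (fun i _ => by positivity)
    (by rw [Finset.sum_const, Finset.card_univ, hcard, nsmul_eq_mul]; field_simp)
    (fun i _ => Nat.cast_nonneg _)
  have hsum' : ∑ i, (1 / (r : ℝ)) * (a i : ℝ) ≤ (n : ℝ) / (r : ℝ) := by
    rw [← Finset.mul_sum]
    have h1 : (∑ i, (a i : ℝ)) ≤ (n : ℝ) := by exact_mod_cast hsum
    calc (1 / (r:ℝ)) * ∑ i, (a i : ℝ) ≤ (1 / (r:ℝ)) * n :=
          mul_le_mul_of_nonneg_left h1 (by positivity)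
    _ = (n:ℝ)/r := by ring
  have hkey : (∏ i, ((a i : ℝ)) ^ (1 / (r : ℝ))) ≤ (n : ℝ) / (r : ℝ) := hgm.trans hsum'
  have hpow := pow_le_pow_left₀ (by positivity) hkey r
  push_cast
  calc ∏ i, (a i : ℝ) = (∏ i, ((a i : ℝ)) ^ (1 / (r : ℝ))) ^ r := by
        rw [← Finset.prod_pow]
        refine Finset.prod_congr rfl fun i _ => ?_
        rw [← Real.rpow_natCast (((a i : ℝ)) ^ (1 / (r:ℝ))) r, ← Real.rpow_mul (Nat.cast_nonneg _)]
        rw [one_div, inv_mul_cancel₀ hr', Real.rpow_one]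
  _ ≤ ((n : ℝ) / (r : ℝ)) ^ r := hpow

lemma numBases_le_of_noline {n r : ℕ} (hfin : M.E.Finite) (hn : M.E.ncard = n)
    (hnl : M.NoLine) (hB₀ : M.IsBase B₀) (hB₀r : B₀.ncard = r) (hr : 0 < r) :
    (M.numBases : ℝ) ≤ ((n : ℝ) / (r : ℝ)) ^ r := by
  classical
  set P : α → Set α := fun b => {e | e ∈ M.E ∧ M.Indep {e} ∧ Rel M e b} with hP
  have hB₀E : B₀ ⊆ M.E := hB₀.subset_ground
  have hB₀fin : B₀.Finite := hfin.subset hB₀E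
  haveI : Fintype ↥B₀ := hB₀fin.fintype
  haveI : ∀ b : α, Fintype ↥(P b) := fun b => (hfin.subset (fun e he => he.1)).fintype
  haveI : Finite ↥M.E := hfin.to_subtype
  -- for each base B and b ∈ B₀ there is a unique element of B in P b
  have hex : ∀ ⦃B⦄, M.IsBase B → ∀ b ∈ B₀, ∃ e, e ∈ B ∧ e ∈ P b := by
    intro B hB b hb
    have hbi : M.Indep {b} := hB₀.indep.subset (singleton_subset_iff.mpr hb)
    obtain ⟨e, heB, hrel⟩ := exists_rel_of_base hnl hB (hB₀E hb) hbi
    exact ⟨e, heB, ⟨hB.subset_ground heB,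
      hB.indep.subset (singleton_subset_iff.mpr heB), hrel.symm'⟩⟩
  have huniq : ∀ ⦃B⦄, M.IsBase B → ∀ b ∈ B₀, ∀ e₁ e₂, e₁ ∈ B ∧ e₁ ∈ P b → e₂ ∈ B ∧ e₂ ∈ P b →
      e₁ = e₂ := by
    intro B hB b hb e₁ e₂ h₁ h₂
    have hbi : M.Indep {b} := hB₀.indep.subset (singleton_subset_iff.mpr hb)
    exact rel_eq hB.indep hbi h₁.1 h₂.1 h₁.2.2.2.symm' h₂.2.2.2.symm'
  -- injection from bases into the product of the classes
  set F : ↥{B : Set α | M.IsBase B} → (∀ b : ↥B₀, ↥(P b.1)) := fun B b =>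
    ⟨(hex B.2 b.1 b.2).choose, (hex B.2 b.1 b.2).choose_spec.2⟩ with hF
  have hFmem : ∀ (B : ↥{B : Set α | M.IsBase B}) (b : ↥B₀), (F B b).1 ∈ B.1 := fun B b =>
    (hex B.2 b.1 b.2).choose_spec.1
  have hFinj : Function.Injective F := by
    intro B₁ B₂ h
    have key : ∀ (B₁ B₂ : ↥{B : Set α | M.IsBase B}), F B₁ = F B₂ → B₁.1 ⊆ B₂.1 := by
      intro B₁ B₂ h x hx
      have hxE : x ∈ M.E := B₁.2.subset_ground hx
      have hxi : M.Indep {x} := B₁.2.indep.subset (singleton_subset_iff.mpr hx)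
      obtain ⟨b, hb, hrel⟩ := exists_rel_of_base hnl hB₀ hxE hxi
      have hxP : x ∈ B₁.1 ∧ x ∈ P b := ⟨hx, ⟨hxE, hxi, hrel⟩⟩
      have h1 : x = (F B₁ ⟨b, hb⟩).1 :=
        huniq B₁.2 b hb _ _ hxP ⟨hFmem B₁ ⟨b, hb⟩, (F B₁ ⟨b, hb⟩).2⟩
      have h2 : (F B₁ ⟨b, hb⟩).1 = (F B₂ ⟨b, hb⟩).1 := by rw [h]
      rw [h1, h2]
      exact hFmem B₂ ⟨b, hb⟩
    exact Subtype.ext (subset_antisymm (key B₁ B₂ h) (key B₂ B₁ h.symm))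
  have hcount : M.numBases ≤ ∏ b : ↥B₀, Nat.card ↥(P b.1) := by
    rw [numBases, ← Nat.card_coe_set_eq, ← Nat.card_pi]
    exact Nat.card_le_card_of_injective F hFinj
  -- disjointness: sum of class sizes at most n
  have hsum : ∑ b : ↥B₀, Nat.card ↥(P b.1) ≤ n := by
    have hG : Function.Injective (fun p : (Σ b : ↥B₀, ↥(P b.1)) => (⟨p.2.1, p.2.2.1⟩ : ↥M.E)) := by
      rintro ⟨b, e⟩ ⟨b', e'⟩ hpq
      simp only [Subtype.mk.injEq] at hpq
      have hbb' : b = b' := by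
        refine Subtype.ext (rel_eq hB₀.indep e.2.2.1 b.2 b'.2 e.2.2.2 ?_)
        rw [hpq]
        exact e'.2.2.2
      subst hbb'
      have : e = e' := Subtype.ext hpq
      rw [this]
    calc ∑ b : ↥B₀, Nat.card ↥(P b.1)
        = ∑ b : ↥B₀, Fintype.card ↥(P b.1) :=
          Finset.sum_congr rfl fun b _ => Nat.card_eq_fintype_card
    _ = Fintype.card (Σ b : ↥B₀, ↥(P b.1)) := (Fintype.card_sigma).symm
    _ = Nat.card (Σ b : ↥B₀, ↥(P b.1)) := Nat.card_eq_fintype_card.symm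
    _ ≤ Nat.card ↥M.E := Nat.card_le_card_of_injective _ hG
    _ = n := by rw [Nat.card_coe_set_eq, hn]
  have hcard : Fintype.card ↥B₀ = r := by
    rw [← Nat.card_eq_fintype_card, Nat.card_coe_set_eq, hB₀r]
  calc (M.numBases : ℝ) ≤ ((∏ b : ↥B₀, Nat.card ↥(P b.1) : ℕ) : ℝ) := Nat.cast_le.mpr hcount
  _ ≤ ((n : ℝ) / (r : ℝ)) ^ r := amgm_bound _ n r hcard hr hsum

end Matroid

namespace PartB

variable (r k : ℕ)

def q (k : ℕ) : ℕ → ℕ := fun x => x / k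

def Ind (r k : ℕ) (I : Set ℕ) : Prop := I ⊆ Set.Iio (r * k) ∧ Set.InjOn (q k) I

def M0 (r k : ℕ) (hk : 0 < k) : Matroid ℕ :=
  (IndepMatroid.ofFinite (Set.finite_Iio (r * k)) (Ind r k)
    (by exact ⟨by simp, Set.injOn_empty _⟩)
    (by
      rintro I J ⟨hJE, hJinj⟩ hIJ
      exact ⟨hIJ.trans hJE, hJinj.mono hIJ⟩)
    (by
      rintro I J ⟨hIE, hIinj⟩ ⟨hJE, hJinj⟩ hlt
      have hfin : ∀ X : Set ℕ, X ⊆ Set.Iio (r * k) → X.Finite :=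
        fun X hX => (Set.finite_Iio (r * k)).subset hX
      have hI : ((q k) '' I).ncard = I.ncard := Set.ncard_image_of_injOn hIinj
      have hJ : ((q k) '' J).ncard = J.ncard := Set.ncard_image_of_injOn hJinj
      have himlt : ((q k) '' I).ncard < ((q k) '' J).ncard := by rw [hI, hJ]; exact hlt
      obtain ⟨c, hcJ, hcI⟩ : ∃ c ∈ (q k) '' J, c ∉ (q k) '' I := by
        by_contra hc
        push_neg at hc
        have := Set.ncard_le_ncard hc ((hfin I hIE).image _)
        omega
      obtain ⟨e, heJ, rfl⟩ := hcJ
      have heI : e ∉ I := fun h => hcI ⟨e, h, rfl⟩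
      refine ⟨e, heJ, heI, ⟨Set.insert_subset (hJE heJ) hIE, ?_⟩⟩
      rw [Set.injOn_insert heI]
      exact ⟨hIinj, hcI⟩)
    (fun I hI => hI.1)).matroid

theorem M0_indep (hk : 0 < k) {I : Set ℕ} : (M0 r k hk).Indep I ↔ Ind r k I := by
  exact Iff.rfl

theorem M0_ground (hk : 0 < k) : (M0 r k hk).E = Set.Iio (r * k) := by rfl

def Φ (r k : ℕ) : (Fin r → Fin k) → Set ℕ :=
  fun g => Set.range (fun c : Fin r => (c : ℕ) * k + (g c : ℕ))

variable {r k}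

lemma q_spec (hk : 0 < k) (c : ℕ) {a : ℕ} (ha : a < k) : q k (c * k + a) = c := by
  unfold q
  rw [mul_comm, Nat.mul_add_div hk, Nat.div_eq_of_lt ha, add_zero]

lemma phi_mem_lt (hk : 0 < k) (g : Fin r → Fin k) (c : Fin r) :
    (c : ℕ) * k + (g c : ℕ) < r * k := by
  have h1 : (c : ℕ) * k + (g c : ℕ) < ((c : ℕ) + 1) * k := by
    have := (g c).2
    nlinarith [(g c).2]
  have h2 : ((c : ℕ) + 1) * k ≤ r * k := Nat.mul_le_mul_right k c.2
  omega

lemma phi_indep (hk : 0 < k) (g : Fin r → Fin k) : Ind r k (Φ r k g) := by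
  constructor
  · rintro x ⟨c, rfl⟩
    exact phi_mem_lt hk g c
  · rintro x ⟨c, rfl⟩ y ⟨c', rfl⟩ hq
    rw [q_spec hk _ (g c).2, q_spec hk _ (g c').2] at hq
    have : c = c' := Fin.ext hq
    rw [this]

lemma phi_base (hk : 0 < k) (g : Fin r → Fin k) : (M0 r k hk).IsBase (Φ r k g) := by
  rw [isBase_iff_maximal_indep]
  refine ⟨(M0_indep r k hk).mpr (phi_indep hk g), fun I hI hsub => ?_⟩
  rw [M0_indep] at hI
  intro e heI
  have heE : e < r * k := hI.1 heI
  have hqe : e / k < r := (Nat.div_lt_iff_lt_mul hk).mpr heE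
  set c : Fin r := ⟨e / k, hqe⟩ with hc
  have hwmem : (c : ℕ) * k + (g c : ℕ) ∈ Φ r k g := ⟨c, rfl⟩
  have hweq : q k ((c : ℕ) * k + (g c : ℕ)) = q k e := by
    rw [q_spec hk _ (g c).2]
    rfl
  have := hI.2 (hsub hwmem) heI hweq
  rw [← this]
  exact hwmem

lemma mul_div_self_eq (hk : 0 < k) (c : ℕ) : c * k / k = c := by
  have := q_spec hk c hk
  simpa [q] using this

lemma base_phi (hk : 0 < k) {B : Set ℕ} (hB : (M0 r k hk).IsBase B) : ∃ g, B = Φ r k g := by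
  have hBi : Ind r k B := (M0_indep r k hk).mp hB.indep
  have hwit : ∀ c : Fin r, ∃ e ∈ B, e / k = (c : ℕ) := by
    intro c
    by_contra hc
    push_neg at hc
    have hckE : (c : ℕ) * k < r * k := (Nat.mul_lt_mul_right hk).mpr c.2
    have hckB : (c : ℕ) * k ∉ B := fun h => hc _ h (mul_div_self_eq hk _)
    have hins : (M0 r k hk).Indep (insert ((c : ℕ) * k) B) := by
      rw [M0_indep]
      refine ⟨Set.insert_subset hckE hBi.1, ?_⟩
      rw [Set.injOn_insert hckB]
      refine ⟨hBi.2, ?_⟩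
      rintro ⟨e, heB, heq⟩
      unfold q at heq
      rw [mul_div_self_eq hk] at heq
      exact hc e heB heq
    have := hB.eq_of_subset_indep hins (Set.subset_insert _ _)
    exact hckB (this ▸ Set.mem_insert _ _)
  choose w hwB hwq using hwit
  refine ⟨fun c => ⟨w c % k, Nat.mod_lt _ hk⟩, ?_⟩
  have hwval : ∀ c : Fin r, (c : ℕ) * k + w c % k = w c := by
    intro c
    conv_rhs => rw [← Nat.div_add_mod (w c) k]
    rw [hwq c, Nat.mul_comm k (c : ℕ)]
  apply Set.eq_of_subset_of_subset
  · intro e heB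
    have heE : e < r * k := hBi.1 heB
    have hqe : e / k < r := (Nat.div_lt_iff_lt_mul hk).mpr heE
    set c : Fin r := ⟨e / k, hqe⟩ with hc
    have : e = w c := hBi.2 heB (hwB c) (by unfold q; rw [hwq c])
    exact ⟨c, by rw [this]; exact hwval c⟩
  · rintro x ⟨c, rfl⟩
    simpa [hwval c] using hwB c

lemma phi_inj (hk : 0 < k) : Function.Injective (Φ r k) := by
  intro g g' h
  funext c
  have hmem : (c : ℕ) * k + (g c : ℕ) ∈ Φ r k g' := by rw [← h]; exact ⟨c, rfl⟩
  obtain ⟨c', hc'⟩ := hmem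
  have hq : c' = c := by
    have := congrArg (q k) hc'
    rwa [q_spec hk _ (g' c').2, q_spec hk _ (g c).2, Fin.val_eq_val] at this
  rw [hq] at hc'
  exact Fin.ext (Nat.add_left_cancel hc').symm

theorem M0_numBases (hk : 0 < k) : (M0 r k hk).numBases = k ^ r := by
  have hset : {B : Set ℕ | (M0 r k hk).IsBase B} = Set.range (Φ r k) := by
    ext B
    exact ⟨fun hB => (base_phi hk hB).imp (fun g hg => hg.symm),
      fun ⟨g, hg⟩ => hg ▸ phi_base hk g⟩
  rw [Matroid.numBases, hset, ← Nat.card_coe_set_eq,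
    Nat.card_range_of_injective (phi_inj hk), Nat.card_pi]
  simp [Nat.card_eq_fintype_card]

theorem M0_ncard_ground (hk : 0 < k) : (M0 r k hk).E.ncard = r * k := by
  rw [M0_ground, ← Nat.card_coe_set_eq, Nat.card_eq_fintype_card, ← Set.toFinset_card, Set.toFinset_Iio, Nat.card_Iio]

theorem M0_rank (hk : 0 < k) : ∃ B, (M0 r k hk).IsBase B ∧ B.ncard = r := by
  refine ⟨Φ r k (fun _ => ⟨0, hk⟩), phi_base hk _, ?_⟩
  rw [← Nat.card_coe_set_eq, Φ]
  rw [Nat.card_range_of_injective (f := fun c : Fin r => (c : ℕ) * k + ((0 : ℕ) : ℕ))]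
  · simp [Nat.card_eq_fintype_card]
  · intro c c' h
    simp only [add_left_inj] at h
    exact Fin.ext (Nat.eq_of_mul_eq_mul_right hk h)

lemma M0_noline (hk : 0 < k) : (M0 r k hk).NoLine := by
  intro D hD
  rw [Matroid.dep_iff, M0_indep] at hD
  obtain ⟨hni, hDE⟩ := hD
  rw [M0_ground] at hDE
  have hninj : ¬ Set.InjOn (q k) D := fun h => hni ⟨hDE, h⟩
  rw [Set.InjOn] at hninj
  push_neg at hninj
  obtain ⟨x, hx, y, hy, hq, hne⟩ := hninj
  refine ⟨x, hx, y, hy, ?_⟩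
  rw [Matroid.dep_iff, M0_indep]
  refine ⟨fun h => hne (h.2 (Set.mem_insert _ _) (Set.mem_insert_of_mem _ rfl) hq), ?_⟩
  rw [M0_ground]
  exact Set.insert_subset (hDE hx) (Set.singleton_subset_iff.mpr (hDE hy))

end PartB

/-- Every `n`-element rank-`r` matroid with no `U_{2,3}`-minor has at most `(n/r)^r` bases,
with equality attainable when `r` divides `n`. -/
theorem unif_23_minor_free_base_bound (n r : ℕ) (hr : 2 ≤ r) (hrn : r ≤ n) :
    (∀ (M : Matroid α), M.E.Finite → M.E.ncard = n → M.RankEq r →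
      ¬ M.HasUnifMinor 2 3 → (M.numBases : ℝ) ≤ ((n : ℝ) / (r : ℝ)) ^ r) ∧
    (r ∣ n → ∃ M : Matroid ℕ, M.E.Finite ∧ M.E.ncard = n ∧ M.RankEq r ∧
      ¬ M.HasUnifMinor 2 3 ∧ M.numBases = (n / r) ^ r) := by
  constructor
  · intro M hfin hn hrank hminor
    obtain ⟨B₀, hB₀, hB₀r⟩ := hrank
    exact Matroid.numBases_le_of_noline hfin hn
      (Matroid.noline_of_not_hasUnifMinor hfin hminor) hB₀ hB₀r (by omega)
  · intro hdvd
    obtain ⟨k, rfl⟩ := hdvd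
    have hk : 0 < k := by
      rcases Nat.eq_zero_or_pos k with rfl | h
      · simp at hrn; omega
      · exact h
    refine ⟨PartB.M0 r k hk, ?_, PartB.M0_ncard_ground hk, PartB.M0_rank hk,
      (PartB.M0_noline hk).not_hasUnifMinor, ?_⟩
    · rw [PartB.M0_ground]; exact Set.finite_Iio _
    · rw [PartB.M0_numBases hk, Nat.mul_div_cancel_left k (by omega : 0 < r)]
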